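/- If a graph is p-arrangeable, then it is (p, 2^{p-1})-degenerate. -/

import Mathlib

/-- A graph `G` is `(d,Δ)`-degenerate if there is an ordering `v_1,…,v_n` of its vertices such
that each `v_i` has at most `d` neighbors `v_j` with `j < i`, and there are at most `Δ` distinct
sets `S ⊆ {v_1,…,v_i}` of the form `S = N(v_j) ∩ {v_1,…,v_i}` for some neighbor `v_j` of `v_i`
with `j > i`. -/
def DDeltaDegenerate {V : Type*} [Fintype V] (G : SimpleGraph V) (d Δ : ℕ) : Prop :=
  ∃ f : Fin (Fintype.card V) ≃ V, ∀ i : Fin (Fintype.card V),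
    {j : Fin (Fintype.card V) | j < i ∧ G.Adj (f j) (f i)}.ncard ≤ d ∧
    {S : Set V | ∃ j : Fin (Fintype.card V), i < j ∧ G.Adj (f j) (f i) ∧
        S = {v : V | G.Adj (f j) v ∧ f.symm v ≤ i}}.ncard ≤ Δ

/-- A graph `G` is `p`-arrangeable if there is an ordering `v_1,…,v_n` of its vertices such that
for each `i`, the neighbors of `v_i` among `{v_{i+1},…,v_n}` have together at most `p`
neighbors in `{v_1,…,v_i}` (including `v_i`). -/
def Arrangeable {V : Type*} [Fintype V] (G : SimpleGraph V) (p : ℕ) : Prop :=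
  ∃ f : Fin (Fintype.card V) ≃ V, ∀ i : Fin (Fintype.card V),
    {v : V | f.symm v ≤ i ∧ ∃ j : Fin (Fintype.card V),
        i < j ∧ G.Adj (f i) (f j) ∧ G.Adj (f j) v}.ncard ≤ p

lemma ncard_powerset_of_finite {α : Type*} {s : Set α} (hs : s.Finite) :
    (𝒫 s).ncard = 2 ^ s.ncard := by
  have := hs.fintype
  rw [← Nat.card_coe_set_eq, Nat.card_congr (Equiv.Set.powerset s),
    Nat.card_eq_fintype_card, Fintype.card_set, ← Nat.card_coe_set_eq,
    Nat.card_eq_fintype_card]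

/-- If a graph is `p`-arrangeable, then it is `(p, 2^{p-1})`-degenerate. -/
theorem stmt_3 {V : Type*} [Fintype V] (G : SimpleGraph V) (p : ℕ)
    (h : Arrangeable G p) : DDeltaDegenerate G p (2 ^ (p - 1)) := by
  obtain ⟨f, hf⟩ := h
  refine ⟨f, fun i => ⟨?_, ?_⟩⟩
  · -- back-degree ≤ p
    set A := {j : Fin (Fintype.card V) | j < i ∧ G.Adj (f j) (f i)} with hA
    rcases A.eq_empty_or_nonempty with hAe | hAne
    · simp [hAe]
    · -- take the maximal element k of A
      obtain ⟨k, hkA, hkmax⟩ := Set.Finite.exists_maximalFor id A A.toFinite hAne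
      have hmax : ∀ a ∈ A, a ≤ k := by
        intro a ha
        by_contra hc
        push_neg at hc
        exact absurd (hkmax ha hc.le) (not_le.2 hc)
      have hsub : ∀ j ∈ A, f j ∈ {v : V | f.symm v ≤ k ∧ ∃ j' : Fin (Fintype.card V),
          k < j' ∧ G.Adj (f k) (f j') ∧ G.Adj (f j') v} := by
        intro j hj
        refine ⟨by simpa using hmax j hj, i, hkA.1, hkA.2, hj.2.symm⟩
      exact le_trans (Set.ncard_le_ncard_of_injOn f hsub f.injective.injOn
        (Set.toFinite _)) (hf k)
  · set B := {v : V | f.symm v ≤ i ∧ ∃ j : Fin (Fintype.card V),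
        i < j ∧ G.Adj (f i) (f j) ∧ G.Adj (f j) v} with hB
    set T := {S : Set V | ∃ j : Fin (Fintype.card V), i < j ∧ G.Adj (f j) (f i) ∧
        S = {v : V | G.Adj (f j) v ∧ f.symm v ≤ i}} with hT
    rcases T.eq_empty_or_nonempty with hTe | ⟨S0, hS0⟩
    · simp [hTe]
    · -- f i ∈ B
      obtain ⟨j0, hj0, hadj0, _⟩ := hS0
      have hfiB : f i ∈ B := ⟨by simp, j0, hj0, hadj0.symm, hadj0⟩
      have hmem : ∀ S ∈ T, f i ∈ S ∧ S ⊆ B := by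
        rintro S ⟨j, hij, hadj, rfl⟩
        refine ⟨⟨hadj, by simp⟩, fun v hv => ⟨hv.2, j, hij, hadj.symm, hv.1⟩⟩
      have hinj : Set.InjOn (fun S => S \ {f i}) T := by
        intro S1 h1 S2 h2 he
        have e1 : insert (f i) (S1 \ {f i}) = S1 := by
          rw [Set.insert_diff_singleton, Set.insert_eq_self.2 (hmem S1 h1).1]
        have e2 : insert (f i) (S2 \ {f i}) = S2 := by
          rw [Set.insert_diff_singleton, Set.insert_eq_self.2 (hmem S2 h2).1]
        simp only [] at he
        rw [← e1, ← e2, he]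
      have hmaps : ∀ S ∈ T, S \ {f i} ∈ 𝒫 (B \ {f i}) :=
        fun S hS => Set.diff_subset_diff_left (hmem S hS).2
      calc T.ncard ≤ (𝒫 (B \ {f i})).ncard :=
            Set.ncard_le_ncard_of_injOn _ hmaps hinj ((B \ {f i}).toFinite.finite_subsets)
        _ = 2 ^ (B \ {f i}).ncard := ncard_powerset_of_finite (Set.toFinite _)
        _ ≤ 2 ^ (p - 1) := by
            apply Nat.pow_le_pow_right (by norm_num)
            rw [Set.ncard_diff_singleton_of_mem hfiB]
            exact Nat.sub_le_sub_right (hf i) 1
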